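/- Let d ≥ 1 and ω : Fin d → ℝ injective. Let L be a real d×d matrix with L_{x'|x} ≥ 0 for x' ≠ x and Σ_{x'} L_{x'|x} = 0 for every x; assume L is diagonalizable over ℂ and has 0 as a simple eigenvalue, with a corresponding eigenvector π that is a probability vector with π_x > 0 for all x. Write P(s) := exp(sL). Suppose ρ : [0,∞) → Matrix (Fin d) (Fin d) ℂ satisfies, for all s, t ≥ 0 and all x', y': |ρ_{x'y'}(t+s)| ≤ Σ_{(x,y) : ω_x − ω_y = ω_{x'} − ω_{y'}} √(P(s)_{x'|x} P(s)_{y'|y}) · |ρ_{xy}(t)|. Then for every x' ≠ y', |ρ_{x'y'}(t)| → 0 as t → ∞. (Corollary 4, part 2: complete loss of coherence under ergodic covariant Markovian dynamics.) -/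

import Mathlib

open Matrix Finset Polynomial

attribute [local instance] Matrix.linftyOpNormedAddCommGroup Matrix.linftyOpNormedRing
  Matrix.linftyOpNormedAlgebra

private theorem aux_gersh (d : ℕ) (L : Matrix (Fin d) (Fin d) ℝ) (U : Matrix (Fin d) (Fin d) ℂ)
    (D : Fin d → ℂ) (hU : IsUnit U.det)
    (hLoff : ∀ x' x, x' ≠ x → 0 ≤ L x' x)
    (hLcol : ∀ x, ∑ x', L x' x = 0)
    (hinvL : U⁻¹ * (L.map Complex.ofReal) = Matrix.diagonal D * U⁻¹) :
    ∀ i, D i = 0 ∨ (D i).re < 0 := by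
  classical
  intro i
  set v : Fin d → ℂ := fun j => U⁻¹ i j with hv
  have hvec : ∀ k, ∑ j, v j * (L j k : ℂ) = D i * v k := by
    intro k
    have := congrFun (congrFun hinvL i) k
    rw [Matrix.mul_apply] at this
    rw [Matrix.diagonal_mul] at this
    simpa [Matrix.map_apply] using this
  have hvne : ∃ j, v j ≠ 0 := by
    by_contra h
    push_neg at h
    have hdet : (U⁻¹).det = 0 := Matrix.det_eq_zero_of_row_eq_zero i h
    exact (Matrix.isUnit_nonsing_inv_det U hU).ne_zero hdet
  obtain ⟨j0, hj0⟩ := hvne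
  obtain ⟨k, -, hk⟩ := Finset.exists_max_image Finset.univ (fun j => ‖v j‖)
    ⟨j0, Finset.mem_univ j0⟩
  have hk' : ∀ j, ‖v j‖ ≤ ‖v k‖ := fun j => hk j (Finset.mem_univ j)
  have hvk : 0 < ‖v k‖ :=
    lt_of_lt_of_le (norm_pos_iff.2 hj0) (hk' j0)
  set c : ℝ := L k k with hc
  have hsplit : (D i - (c : ℂ)) * v k = ∑ j ∈ Finset.univ.erase k, (L j k : ℂ) * v j := by
    have h1 : ∑ j ∈ Finset.univ.erase k, v j * (L j k : ℂ) + v k * (L k k : ℂ)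
        = ∑ j, v j * (L j k : ℂ) := Finset.sum_erase_add _ _ (Finset.mem_univ k)
    rw [hvec k] at h1
    have : (D i - (c : ℂ)) * v k = ∑ j ∈ Finset.univ.erase k, v j * (L j k : ℂ) := by
      rw [sub_mul]
      rw [← h1]
      ring
    rw [this]
    exact Finset.sum_congr rfl fun j _ => by ring
  have herase : ∑ j ∈ Finset.univ.erase k, L j k = -c := by
    have h1 : ∑ j ∈ Finset.univ.erase k, L j k + L k k = ∑ j, L j k :=
      Finset.sum_erase_add _ _ (Finset.mem_univ k)
    rw [hLcol k] at h1
    linarith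
  have hbound : ‖D i - (c : ℂ)‖ ≤ -c := by
    have h1 : ‖D i - (c : ℂ)‖ * ‖v k‖
        ≤ ∑ j ∈ Finset.univ.erase k, L j k * ‖v k‖ := by
      rw [← norm_mul, hsplit]
      refine le_trans (norm_sum_le _ _) (Finset.sum_le_sum fun j hj => ?_)
      rw [norm_mul]
      have hLjk : 0 ≤ L j k := hLoff j k (Finset.ne_of_mem_erase hj)
      have : ‖(L j k : ℂ)‖ = L j k := by
        rw [Complex.norm_real, Real.norm_eq_abs, abs_of_nonneg hLjk]
      rw [this]
      exact mul_le_mul_of_nonneg_left (hk' j) hLjk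
    rw [← Finset.sum_mul, herase] at h1
    exact le_of_mul_le_mul_right h1 hvk
  have hc0 : c ≤ 0 := by
    have := (norm_nonneg (D i - (c : ℂ))).trans hbound
    linarith
  have hsq : ((D i).re - c) ^ 2 + (D i).im ^ 2 ≤ c ^ 2 := by
    have h2 : ‖D i - (c : ℂ)‖ ^ 2 ≤ (-c) ^ 2 := by
      have := norm_nonneg (D i - (c : ℂ))
      nlinarith
    rw [Complex.sq_norm, Complex.normSq_apply] at h2
    simp only [Complex.sub_re, Complex.ofReal_re, Complex.sub_im, Complex.ofReal_im,
      sub_zero] at h2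
    nlinarith
  by_cases hre : (D i).re < 0
  · exact Or.inr hre
  · push_neg at hre
    left
    have him : (D i).im = 0 := by nlinarith
    have hre0 : (D i).re = 0 := by nlinarith
    exact Complex.ext hre0 him

private theorem aux_uniq (d : ℕ) (L : Matrix (Fin d) (Fin d) ℝ) (U : Matrix (Fin d) (Fin d) ℂ)
    (D : Fin d → ℂ) (hU : IsUnit U.det)
    (hULU : L.map Complex.ofReal = U * Matrix.diagonal D * U⁻¹)
    (hsimple : Polynomial.rootMultiplicity 0 (L.map Complex.ofReal).charpoly = 1) :
    ∃ i₀, D i₀ = 0 ∧ ∀ i, D i = 0 → i = i₀ := by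
  classical
  set Lc : Matrix (Fin d) (Fin d) ℂ := L.map Complex.ofReal with hLcdef
  have hUunit : IsUnit U := (Matrix.isUnit_iff_isUnit_det U).2 hU
  obtain ⟨u, hu⟩ := hUunit
  have hchar : Lc.charpoly = (Matrix.diagonal D).charpoly := by
    let φ : Matrix (Fin d) (Fin d) ℂ →+* Matrix (Fin d) (Fin d) ℂ[X] :=
      (Polynomial.C : ℂ →+* ℂ[X]).mapMatrix
    let v : (Matrix (Fin d) (Fin d) ℂ[X])ˣ := Units.map φ.toMonoidHom u
    have hv : (v : Matrix (Fin d) (Fin d) ℂ[X]) = φ U := by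
      simp [v, hu]
    have hv' : ((v⁻¹ : (Matrix (Fin d) (Fin d) ℂ[X])ˣ) : Matrix (Fin d) (Fin d) ℂ[X])
        = φ U⁻¹ := by
      have : ((v⁻¹ : _ˣ) : Matrix (Fin d) (Fin d) ℂ[X])
          = φ ((u⁻¹ : _ˣ) : Matrix (Fin d) (Fin d) ℂ) := by
        simp [v]
      rw [this, Matrix.coe_units_inv, hu]
    have hcm : Matrix.charmatrix Lc
        = v * Matrix.charmatrix (Matrix.diagonal D) * (v⁻¹ : _ˣ) := by
      unfold Matrix.charmatrix
      rw [mul_sub, sub_mul]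
      congr 1
      · rw [hv, hv']
        have hcomm : Commute (φ U) (Matrix.scalar (Fin d) (X : ℂ[X])) :=
          (Matrix.scalar_commute (X : ℂ[X]) (fun r => Commute.all X r) (φ U)).symm
        rw [hcomm.eq, Matrix.mul_assoc, ← _root_.map_mul φ, Matrix.mul_nonsing_inv U hU,
          _root_.map_one, mul_one]
      · rw [hv, hv']
        have : (φ U) * ((Polynomial.C : ℂ →+* ℂ[X]).mapMatrix (Matrix.diagonal D)) * (φ U⁻¹)
            = (Polynomial.C : ℂ →+* ℂ[X]).mapMatrix Lc := by
          rw [hULU]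
          simp only [φ, RingHom.mapMatrix_apply, Matrix.map_mul]
        rw [this]
    rw [Matrix.charpoly, Matrix.charpoly, hcm, Matrix.det_units_conj]
  have hdiagchar : (Matrix.diagonal D).charpoly = ∏ i, (X - Polynomial.C (D i)) := by
    rw [Matrix.charpoly_of_upperTriangular _ (Matrix.blockTriangular_diagonal D)]
    exact Finset.prod_congr rfl fun i _ => by rw [Matrix.diagonal_apply_eq]
  have hroots : Lc.charpoly.roots = Multiset.map D Finset.univ.val := by
    rw [hchar, hdiagchar]
    have : ∏ i, (X - Polynomial.C (D i))
        = ((Multiset.map D Finset.univ.val).map (fun a => X - Polynomial.C a)).prod := by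
      rw [Multiset.map_map]
      rfl
    rw [this, Polynomial.roots_multiset_prod_X_sub_C]
  have hcount : Multiset.count 0 (Multiset.map D Finset.univ.val) = 1 := by
    rw [← hroots, Polynomial.count_roots, hsimple]
  have hcard : (Finset.univ.filter (fun i => D i = 0)).card = 1 := by
    rw [Multiset.count_map] at hcount
    rw [← hcount, Finset.card, Finset.filter_val]
    congr 1
    exact Multiset.filter_congr (fun x _ => ⟨fun h => h.symm, fun h => h.symm⟩)
  obtain ⟨i₀, hi₀⟩ := Finset.card_eq_one.1 hcard
  refine ⟨i₀, ?_, ?_⟩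
  · have : i₀ ∈ Finset.univ.filter (fun i => D i = 0) := by
      rw [hi₀]; exact Finset.mem_singleton_self i₀
    exact (Finset.mem_filter.1 this).2
  · intro i hi
    have : i ∈ Finset.univ.filter (fun i => D i = 0) :=
      Finset.mem_filter.2 ⟨Finset.mem_univ i, hi⟩
    rw [hi₀] at this
    exact Finset.mem_singleton.1 this

private theorem aux_proj (d : ℕ) (L : Matrix (Fin d) (Fin d) ℝ) (U : Matrix (Fin d) (Fin d) ℂ)
    (D : Fin d → ℂ) (hU : IsUnit U.det) (i₀ : Fin d)
    (hLcol : ∀ x, ∑ x', L x' x = 0)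
    (pr : Fin d → ℝ) (hprsum : ∑ x, pr x = 1) (hprfix : L *ᵥ pr = 0)
    (hULU : L.map Complex.ofReal = U * Matrix.diagonal D * U⁻¹)
    (huniq : ∀ i, D i = 0 → i = i₀) :
    ∀ x' x, U x' i₀ * U⁻¹ i₀ x = ((pr x' : ℂ)) := by
  classical
  set Lc : Matrix (Fin d) (Fin d) ℂ := L.map Complex.ofReal with hLcdef
  have hUU : U⁻¹ * U = 1 := Matrix.nonsing_inv_mul U hU
  have hUU' : U * U⁻¹ = 1 := Matrix.mul_nonsing_inv U hU
  have hinvL : U⁻¹ * Lc = Matrix.diagonal D * U⁻¹ := by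
    rw [hULU, ← Matrix.mul_assoc, ← Matrix.mul_assoc, hUU, Matrix.one_mul]
  have hLU : Lc * U = U * Matrix.diagonal D := by
    rw [hULU, Matrix.mul_assoc, hUU, Matrix.mul_one]
  set prc : Fin d → ℂ := fun x => ((pr x : ℂ)) with hprc
  have hLcprc : Lc *ᵥ prc = 0 := by
    funext x
    have hx : ∑ j, L x j * pr j = 0 := congrFun hprfix x
    simp only [Matrix.mulVec, dotProduct, hLcdef, Matrix.map_apply, hprc]
    show (∑ j, (L x j : ℂ) * (pr j : ℂ)) = (0 : Fin d → ℂ) x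
    have : (∑ j, (L x j : ℂ) * (pr j : ℂ)) = ((∑ j, L x j * pr j : ℝ) : ℂ) := by
      push_cast; rfl
    rw [this, hx]
    simp
  set w : Fin d → ℂ := U⁻¹ *ᵥ prc with hw
  have hDw : ∀ i, D i * w i = 0 := by
    have : Matrix.diagonal D *ᵥ w = 0 := by
      rw [hw, Matrix.mulVec_mulVec, ← hinvL, ← Matrix.mulVec_mulVec, hLcprc, Matrix.mulVec_zero]
    intro i
    have := congrFun this i
    rwa [Matrix.mulVec_diagonal] at this
  have hw0 : ∀ i, i ≠ i₀ → w i = 0 := by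
    intro i hi
    have hDi : D i ≠ 0 := fun h => hi (huniq i h)
    exact (mul_eq_zero.1 (hDw i)).resolve_left hDi
  have hprcw : ∀ x', prc x' = w i₀ * U x' i₀ := by
    intro x'
    have h1 : U *ᵥ w = prc := by
      rw [hw, Matrix.mulVec_mulVec, hUU', Matrix.one_mulVec]
    have h2 : prc x' = ∑ i, U x' i * w i := by
      rw [← h1]; rfl
    rw [h2, Finset.sum_eq_single i₀ (fun i _ hi => by rw [hw0 i hi, mul_zero])
      (fun h => absurd (Finset.mem_univ i₀) h)]
    ring
  set z : Fin d → ℂ := fun i => ∑ x, U x i with hz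
  have hones : (fun _ : Fin d => (1 : ℂ)) ᵥ* Lc = 0 := by
    funext x
    have hx : ∑ j, L j x = 0 := hLcol x
    simp only [Matrix.vecMul, dotProduct, one_mul, hLcdef, Matrix.map_apply]
    rw [← Complex.ofReal_sum, hx, Complex.ofReal_zero]
    rfl
  have hzvec : z = (fun _ : Fin d => (1 : ℂ)) ᵥ* U := by
    funext i
    simp [hz, Matrix.vecMul, dotProduct]
  have hz0 : ∀ i, i ≠ i₀ → z i = 0 := by
    have h1 : z ᵥ* Matrix.diagonal D = 0 := by
      rw [hzvec, Matrix.vecMul_vecMul, ← hLU, ← Matrix.vecMul_vecMul, hones, Matrix.zero_vecMul]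
    intro i hi
    have := congrFun h1 i
    rw [Matrix.vecMul_diagonal] at this
    have hDi : D i ≠ 0 := fun h => hi (huniq i h)
    exact (mul_eq_zero.1 this).resolve_right hDi
  have hone : ∀ x, z i₀ * U⁻¹ i₀ x = 1 := by
    intro x
    have h1 : z ᵥ* U⁻¹ = (fun _ : Fin d => (1 : ℂ)) := by
      rw [hzvec, Matrix.vecMul_vecMul, hUU', Matrix.vecMul_one]
    have h2 : ∑ i, z i * U⁻¹ i x = 1 := by
      have := congrFun h1 x
      simpa [Matrix.vecMul, dotProduct] using this
    rw [← h2, Finset.sum_eq_single i₀ (fun i _ hi => by rw [hz0 i hi, zero_mul])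
      (fun h => absurd (Finset.mem_univ i₀) h)]
  have hwz : w i₀ * z i₀ = 1 := by
    have h1 : ∑ x, prc x = 1 := by
      simp only [hprc]
      rw [← Complex.ofReal_sum, hprsum, Complex.ofReal_one]
    calc w i₀ * z i₀ = ∑ x, w i₀ * U x i₀ := by rw [hz, Finset.mul_sum]
      _ = ∑ x, prc x := Finset.sum_congr rfl fun x _ => (hprcw x).symm
      _ = 1 := h1
  intro x' x
  calc U x' i₀ * U⁻¹ i₀ x = (w i₀ * z i₀) * (U x' i₀ * U⁻¹ i₀ x) := by rw [hwz, one_mul]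
    _ = (w i₀ * U x' i₀) * (z i₀ * U⁻¹ i₀ x) := by ring
    _ = prc x' * 1 := by rw [← hprcw, hone]
    _ = prc x' := mul_one _

private theorem aux_entry (d : ℕ) (L : Matrix (Fin d) (Fin d) ℝ) (U : Matrix (Fin d) (Fin d) ℂ)
    (D : Fin d → ℂ) (hU : IsUnit U.det)
    (hULU : L.map Complex.ofReal = U * Matrix.diagonal D * U⁻¹) :
    ∀ (s : ℝ) (x' x : Fin d), NormedSpace.exp (s • L) x' x
      = (∑ i, U x' i * Complex.exp ((s : ℂ) * D i) * U⁻¹ i x).re := by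
  have hUunit : IsUnit U := (Matrix.isUnit_iff_isUnit_det U).2 hU
  have hcont : Continuous (⇑(Complex.ofRealHom.mapMatrix :
      Matrix (Fin d) (Fin d) ℝ →+* Matrix (Fin d) (Fin d) ℂ)) :=
    LinearMap.continuous_of_finiteDimensional
      { toFun := ⇑(Complex.ofRealHom.mapMatrix :
          Matrix (Fin d) (Fin d) ℝ →+* Matrix (Fin d) (Fin d) ℂ)
        map_add' := by intro A B; ext i j; simp
        map_smul' := by
          intro (c : ℝ) A
          ext i j
          simp [Matrix.smul_apply, Matrix.map_apply, smul_eq_mul, Complex.real_smul] }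
  intro s x' x
  have h1 : (NormedSpace.exp (s • L)).map Complex.ofReal
      = NormedSpace.exp ((s • L).map Complex.ofReal) :=
    NormedSpace.map_exp (Complex.ofRealHom.mapMatrix) hcont _
  have h2 : (s • L).map Complex.ofReal
      = U * Matrix.diagonal (fun i => (s : ℂ) * D i) * U⁻¹ := by
    have e1 : (s • L).map Complex.ofReal = (s : ℂ) • (L.map Complex.ofReal) := by
      ext i j
      simp [Matrix.smul_apply, Matrix.map_apply, smul_eq_mul, Complex.real_smul]
    rw [e1, hULU, ← Matrix.smul_mul, ← Matrix.mul_smul, ← Matrix.diagonal_smul]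
    rfl
  have h3 : NormedSpace.exp (U * Matrix.diagonal (fun i => (s : ℂ) * D i) * U⁻¹)
      = U * Matrix.diagonal (fun i => Complex.exp ((s : ℂ) * D i)) * U⁻¹ := by
    rw [Matrix.exp_conj U _ hUunit, Matrix.exp_diagonal]
    congr 2
    funext i
    rw [Pi.exp_def, Complex.exp_eq_exp_ℂ]
  have h4 : ((NormedSpace.exp (s • L)).map Complex.ofReal) x' x
      = ∑ i, U x' i * Complex.exp ((s : ℂ) * D i) * U⁻¹ i x := by
    rw [h1, h2, h3]
    rw [Matrix.mul_apply]
    refine Finset.sum_congr rfl fun i _ => ?_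
    rw [Matrix.mul_diagonal]
  rw [← h4]
  simp [Matrix.map_apply]

theorem aux_limit (d : ℕ) (L : Matrix (Fin d) (Fin d) ℝ)
    (hLoff : ∀ x' x, x' ≠ x → 0 ≤ L x' x)
    (hLcol : ∀ x, ∑ x', L x' x = 0)
    (hdiag : ∃ (U : Matrix (Fin d) (Fin d) ℂ) (D : Fin d → ℂ),
      IsUnit U.det ∧ L.map Complex.ofReal = U * Matrix.diagonal D * U⁻¹)
    (hsimple : Polynomial.rootMultiplicity 0 (L.map Complex.ofReal).charpoly = 1)
    (pr : Fin d → ℝ) (hprsum : ∑ x, pr x = 1)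
    (hprfix : L *ᵥ pr = 0) :
    ∀ x' x, Filter.Tendsto (fun s : ℝ => NormedSpace.exp (s • L) x' x)
      Filter.atTop (nhds (pr x')) := by
  classical
  obtain ⟨U, D, hU, hULU⟩ := hdiag
  have hUU : U⁻¹ * U = 1 := Matrix.nonsing_inv_mul U hU
  have hinvL : U⁻¹ * (L.map Complex.ofReal) = Matrix.diagonal D * U⁻¹ := by
    rw [hULU, ← Matrix.mul_assoc, ← Matrix.mul_assoc, hUU, Matrix.one_mul]
  have hspec := aux_gersh d L U D hU hLoff hLcol hinvL
  obtain ⟨i₀, hDi₀, huniq⟩ := aux_uniq d L U D hU hULU hsimple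
  have hPi := aux_proj d L U D hU i₀ hLcol pr hprsum hprfix hULU huniq
  have hE := aux_entry d L U D hU hULU
  intro x' x
  have hterm : ∀ i : Fin d, Filter.Tendsto
      (fun s : ℝ => U x' i * Complex.exp ((s : ℂ) * D i) * U⁻¹ i x)
      Filter.atTop (nhds (if i = i₀ then ((pr x' : ℂ)) else 0)) := by
    intro i
    by_cases hi : i = i₀
    · subst hi
      simp only [if_pos rfl, hDi₀, mul_zero, Complex.exp_zero, mul_one]
      exact tendsto_const_nhds.congr (fun s => by rw [if_pos trivial, ← hPi x' x])
    · rw [if_neg hi]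
      have hre : (D i).re < 0 := (hspec i).resolve_left (fun h => hi (huniq i h))
      rw [tendsto_zero_iff_norm_tendsto_zero]
      have heq : ∀ s : ℝ, ‖U x' i * Complex.exp ((s : ℂ) * D i) * U⁻¹ i x‖
          = (‖U x' i‖ * ‖U⁻¹ i x‖) * Real.exp (s * (D i).re) := by
        intro s
        simp only [norm_mul, Complex.norm_exp, Complex.mul_re,
          Complex.ofReal_re, Complex.ofReal_im, zero_mul, sub_zero]
        ring
      have hlim : Filter.Tendsto (fun s : ℝ => (‖U x' i‖ * ‖U⁻¹ i x‖)
          * Real.exp (s * (D i).re)) Filter.atTop (nhds 0) := by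
        have h1 : Filter.Tendsto (fun s : ℝ => s * (D i).re) Filter.atTop Filter.atBot :=
          Filter.Tendsto.atTop_mul_const_of_neg hre Filter.tendsto_id
        have h2 := Real.tendsto_exp_atBot.comp h1
        simpa using h2.const_mul (‖U x' i‖ * ‖U⁻¹ i x‖)
      exact hlim.congr (fun s => (heq s).symm)
  have hsum := tendsto_finset_sum Finset.univ (fun i _ => hterm i)
  have hval : (∑ i, if i = i₀ then ((pr x' : ℂ)) else 0) = ((pr x' : ℂ)) := by
    rw [Finset.sum_ite_eq' Finset.univ i₀ (fun _ => ((pr x' : ℂ)))]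
    simp
  rw [hval] at hsum
  have hfin := (Complex.continuous_re.tendsto _).comp hsum
  simp only [Complex.ofReal_re] at hfin
  exact hfin.congr (fun s => (hE s x' x).symm)

set_option maxHeartbeats 2000000 in
/-- **Corollary 4, part 2.** Under ergodic covariant Markovian dynamics (the population
transfer rate matrix `L` is diagonalizable, has `0` as a simple eigenvalue, with a fully
supported stationary probability vector `pr`), every coherence element vanishes in the
long-time limit: `|ρ_{x'y'}(t)| → 0` as `t → ∞` for all `x' ≠ y'`. -/
theorem coherence_vanishes_ergodic
    (d : ℕ) (hd : 1 ≤ d) (ω : Fin d → ℝ) (hω : Function.Injective ω)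
    (L : Matrix (Fin d) (Fin d) ℝ)
    (hLoff : ∀ x' x, x' ≠ x → 0 ≤ L x' x)
    (hLcol : ∀ x, ∑ x', L x' x = 0)
    (hdiag : ∃ (U : Matrix (Fin d) (Fin d) ℂ) (D : Fin d → ℂ),
      IsUnit U.det ∧ L.map Complex.ofReal = U * Matrix.diagonal D * U⁻¹)
    (hsimple : Polynomial.rootMultiplicity 0 (L.map Complex.ofReal).charpoly = 1)
    (pr : Fin d → ℝ)
    (hprpos : ∀ x, 0 < pr x) (hprsum : ∑ x, pr x = 1)
    (hprfix : L *ᵥ pr = 0)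
    (ρ : ℝ → Matrix (Fin d) (Fin d) ℂ)
    (hbound : ∀ s ≥ (0 : ℝ), ∀ t ≥ (0 : ℝ), ∀ x' y' : Fin d,
      ‖ρ (t + s) x' y'‖ ≤
        ∑ p ∈ Finset.univ.filter
            (fun p : Fin d × Fin d => ω p.1 - ω p.2 = ω x' - ω y'),
          Real.sqrt (NormedSpace.exp (s • L) x' p.1 * NormedSpace.exp (s • L) y' p.2) *
            ‖ρ t p.1 p.2‖) :
    ∀ x' y' : Fin d, x' ≠ y' →
      Filter.Tendsto (fun t => ‖ρ t x' y'‖) Filter.atTop (nhds 0) := by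
  intro x' y' hne
  have hlim := aux_limit d L hLoff hLcol hdiag hsimple pr hprsum hprfix
  have hδ : ω x' - ω y' ≠ 0 := sub_ne_zero.2 (fun hh => hne (hω hh))
  set C : Finset (Fin d × Fin d) :=
    Finset.univ.filter (fun p : Fin d × Fin d => ω p.1 - ω p.2 = ω x' - ω y') with hC
  have hmemC : (x', y') ∈ C := Finset.mem_filter.2 ⟨Finset.mem_univ _, rfl⟩
  have hinj1 : ∀ p ∈ C, ∀ q ∈ C, p.1 = q.1 → p = q := by
    intro p hp q hq h1
    have hp2 := (Finset.mem_filter.1 hp).2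
    have hq2 := (Finset.mem_filter.1 hq).2
    refine Prod.ext h1 (hω ?_)
    rw [h1] at hp2
    linarith
  have hinj2 : ∀ p ∈ C, ∀ q ∈ C, p.2 = q.2 → p = q := by
    intro p hp q hq h1
    have hp2 := (Finset.mem_filter.1 hp).2
    have hq2 := (Finset.mem_filter.1 hq).2
    refine Prod.ext (hω ?_) h1
    rw [h1] at hp2
    linarith
  set S : Finset (Fin d) := C.image Prod.fst with hS
  -- S is a proper subset
  obtain ⟨z, hz⟩ : ∃ z, z ∉ S := by
    by_contra h
    push_neg at h
    have hg : ∀ x : Fin d, ∃ y : Fin d, ω x - ω y = ω x' - ω y' := by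
      intro x
      obtain ⟨p, hpC, hpx⟩ := Finset.mem_image.1 (h x)
      exact ⟨p.2, by rw [← hpx]; exact (Finset.mem_filter.1 hpC).2⟩
    choose g hgspec using hg
    have hginj : Function.Injective g := by
      intro a b hab
      apply hω
      have ha := hgspec a
      have hb := hgspec b
      rw [hab] at ha
      linarith
    have hgbij : Function.Bijective g := Finite.injective_iff_bijective.1 hginj
    have hsum : ∑ x, ω (g x) = ∑ x, ω x := Function.Bijective.sum_comp hgbij ω
    have hsum2 : ∑ x, ω (g x) = ∑ x, ω x - ∑ _x : Fin d, (ω x' - ω y') := by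
      rw [← Finset.sum_sub_distrib]
      exact Finset.sum_congr rfl fun x _ => by linarith [hgspec x]
    have hconst : ∑ _x : Fin d, (ω x' - ω y') = (d : ℝ) * (ω x' - ω y') := by
      rw [Finset.sum_const, Finset.card_univ, Fintype.card_fin, nsmul_eq_mul]
    have hd0 : (0 : ℝ) < (d : ℝ) := by exact_mod_cast Nat.lt_of_lt_of_le Nat.zero_lt_one hd
    have : (d : ℝ) * (ω x' - ω y') = 0 := by
      rw [hsum2, hconst] at hsum
      linarith
    exact hδ ((mul_eq_zero.1 this).resolve_left (ne_of_gt hd0))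
  set α : ℝ := ∑ x ∈ S, pr x with hα
  have hα0 : 0 ≤ α := Finset.sum_nonneg fun x _ => (hprpos x).le
  have hα1 : α < 1 := by
    have hsplit : α + ∑ x ∈ Sᶜ, pr x = 1 := by
      rw [hα, Finset.sum_add_sum_compl, hprsum]
    have hzc : z ∈ Sᶜ := Finset.mem_compl.2 hz
    have : pr z ≤ ∑ x ∈ Sᶜ, pr x :=
      Finset.single_le_sum (fun x _ => (hprpos x).le) hzc
    linarith [hprpos z]
  set ε : ℝ := (1 - α) / 3 with hεdef
  have hε : 0 < ε := by rw [hεdef]; linarith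
  have hprod0 : 0 ≤ (α + ε) * (1 + ε) := by positivity
  have hprod1 : (α + ε) * (1 + ε) < 1 := by nlinarith
  set q : ℝ := Real.sqrt ((α + ε) * (1 + ε)) with hqdef
  have hq0 : 0 ≤ q := Real.sqrt_nonneg _
  have hq1 : q < 1 := by
    have h := Real.sqrt_lt_sqrt hprod0 hprod1
    rwa [Real.sqrt_one] at h
  -- eventual column bounds
  have hev : ∀ᶠ s in (Filter.atTop : Filter ℝ), ∀ x : Fin d,
      (∑ u ∈ S, |NormedSpace.exp (s • L) u x| ≤ α + ε) ∧
      (∑ u, |NormedSpace.exp (s • L) u x| ≤ 1 + ε) := by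
    rw [Filter.eventually_all]
    intro x
    have t1 : Filter.Tendsto (fun s : ℝ => ∑ u ∈ S, |NormedSpace.exp (s • L) u x|)
        Filter.atTop (nhds α) := by
      have h := tendsto_finset_sum S (fun u (_ : u ∈ S) => (hlim u x).abs)
      have e : ∑ u ∈ S, |pr u| = α := Finset.sum_congr rfl fun u _ => abs_of_pos (hprpos u)
      rwa [e] at h
    have t2 : Filter.Tendsto (fun s : ℝ => ∑ u, |NormedSpace.exp (s • L) u x|)
        Filter.atTop (nhds 1) := by
      have h := tendsto_finset_sum Finset.univ (fun u (_ : u ∈ Finset.univ) => (hlim u x).abs)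
      have e : ∑ u, |pr u| = 1 := by
        rw [← hprsum]; exact Finset.sum_congr rfl fun u _ => abs_of_pos (hprpos u)
      rwa [e] at h
    exact (t1.eventually (eventually_le_nhds (by linarith))).and
      (t2.eventually (eventually_le_nhds (by linarith)))
  obtain ⟨S₀', hS₀'⟩ := Filter.eventually_atTop.1 hev
  set S₀ : ℝ := max S₀' 1 with hS₀def
  have hS₀1 : (1 : ℝ) ≤ S₀ := le_max_right _ _
  have hS₀ : ∀ s ≥ S₀, ∀ x : Fin d,
      (∑ u ∈ S, |NormedSpace.exp (s • L) u x| ≤ α + ε) ∧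
      (∑ u, |NormedSpace.exp (s • L) u x| ≤ 1 + ε) :=
    fun s hs => hS₀' s (le_trans (le_max_left _ _) hs)
  set A : ℝ → ℝ := fun t => ∑ p ∈ C, ‖ρ t p.1 p.2‖ with hA
  have hA0 : ∀ t, 0 ≤ A t := fun t => Finset.sum_nonneg fun p _ => norm_nonneg _
  have hρA : ∀ t, ‖ρ t x' y'‖ ≤ A t := fun t =>
    Finset.single_le_sum (f := fun p : Fin d × Fin d => ‖ρ t p.1 p.2‖)
      (fun p _ => norm_nonneg _) hmemC
  -- contraction estimate
  have hkey : ∀ s, S₀ ≤ s → ∀ t, (0:ℝ) ≤ t → A (t + s) ≤ q * A t := by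
    intro s hs t ht
    have hs0 : (0:ℝ) ≤ s := le_trans (by linarith) hs
    have hinner : ∀ p ∈ C, (∑ p' ∈ C,
        Real.sqrt (NormedSpace.exp (s • L) p'.1 p.1 * NormedSpace.exp (s • L) p'.2 p.2)) ≤ q := by
      intro p _
      have step1 : ∀ p' ∈ C,
          Real.sqrt (NormedSpace.exp (s • L) p'.1 p.1 * NormedSpace.exp (s • L) p'.2 p.2)
          ≤ Real.sqrt |NormedSpace.exp (s • L) p'.1 p.1|
            * Real.sqrt |NormedSpace.exp (s • L) p'.2 p.2| := by
        intro p' _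
        rw [← Real.sqrt_mul (abs_nonneg _)]
        apply Real.sqrt_le_sqrt
        calc NormedSpace.exp (s • L) p'.1 p.1 * NormedSpace.exp (s • L) p'.2 p.2
            ≤ |NormedSpace.exp (s • L) p'.1 p.1 * NormedSpace.exp (s • L) p'.2 p.2| :=
              le_abs_self _
          _ = |NormedSpace.exp (s • L) p'.1 p.1| * |NormedSpace.exp (s • L) p'.2 p.2| :=
              abs_mul _ _
      have csq : (∑ p' ∈ C, Real.sqrt |NormedSpace.exp (s • L) p'.1 p.1|
            * Real.sqrt |NormedSpace.exp (s • L) p'.2 p.2|) ^ 2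
          ≤ (∑ p' ∈ C, |NormedSpace.exp (s • L) p'.1 p.1|)
            * (∑ p' ∈ C, |NormedSpace.exp (s • L) p'.2 p.2|) :=
        Finset.sum_sq_le_sum_mul_sum_of_sq_eq_mul C
          (fun p' _ => abs_nonneg _) (fun p' _ => abs_nonneg _)
          (fun p' _ => by
            rw [mul_pow, Real.sq_sqrt (abs_nonneg _), Real.sq_sqrt (abs_nonneg _)])
      have e1 : ∑ p' ∈ C, |NormedSpace.exp (s • L) p'.1 p.1|
          = ∑ u ∈ S, |NormedSpace.exp (s • L) u p.1| :=
        (Finset.sum_image (s := C) (g := Prod.fst)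
          (f := fun u => |NormedSpace.exp (s • L) u p.1|)
          (fun a ha b hb hab => hinj1 a ha b hb hab)).symm
      have e2 : ∑ p' ∈ C, |NormedSpace.exp (s • L) p'.2 p.2|
          ≤ ∑ u, |NormedSpace.exp (s • L) u p.2| := by
        rw [show ∑ p' ∈ C, |NormedSpace.exp (s • L) p'.2 p.2|
            = ∑ u ∈ C.image Prod.snd, |NormedSpace.exp (s • L) u p.2| from
          (Finset.sum_image (s := C) (g := Prod.snd)
            (f := fun u => |NormedSpace.exp (s • L) u p.2|)
            (fun a ha b hb hab => hinj2 a ha b hb hab)).symm]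
        exact Finset.sum_le_sum_of_subset_of_nonneg (Finset.subset_univ _)
          (fun u _ _ => abs_nonneg _)
      have b1 := (hS₀ s hs p.1).1
      have b2 := (hS₀ s hs p.2).2
      have hb2nn : 0 ≤ ∑ p' ∈ C, |NormedSpace.exp (s • L) p'.2 p.2| :=
        Finset.sum_nonneg fun p' _ => abs_nonneg _
      have total : (∑ p' ∈ C, Real.sqrt |NormedSpace.exp (s • L) p'.1 p.1|
            * Real.sqrt |NormedSpace.exp (s • L) p'.2 p.2|) ^ 2 ≤ (α + ε) * (1 + ε) := by
        refine csq.trans (mul_le_mul ?_ (e2.trans b2) hb2nn (by linarith))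
        rw [e1]; exact b1
      have hsum0 : 0 ≤ ∑ p' ∈ C, Real.sqrt |NormedSpace.exp (s • L) p'.1 p.1|
          * Real.sqrt |NormedSpace.exp (s • L) p'.2 p.2| :=
        Finset.sum_nonneg fun p' _ => mul_nonneg (Real.sqrt_nonneg _) (Real.sqrt_nonneg _)
      have final : ∑ p' ∈ C, Real.sqrt |NormedSpace.exp (s • L) p'.1 p.1|
          * Real.sqrt |NormedSpace.exp (s • L) p'.2 p.2| ≤ q := by
        calc ∑ p' ∈ C, Real.sqrt |NormedSpace.exp (s • L) p'.1 p.1|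
              * Real.sqrt |NormedSpace.exp (s • L) p'.2 p.2|
            = Real.sqrt ((∑ p' ∈ C, Real.sqrt |NormedSpace.exp (s • L) p'.1 p.1|
              * Real.sqrt |NormedSpace.exp (s • L) p'.2 p.2|) ^ 2) :=
              (Real.sqrt_sq hsum0).symm
          _ ≤ Real.sqrt ((α + ε) * (1 + ε)) := Real.sqrt_le_sqrt total
          _ = q := rfl
      exact (Finset.sum_le_sum step1).trans final
    have hb : ∀ p' ∈ C, ‖ρ (t + s) p'.1 p'.2‖ ≤ ∑ p ∈ C,
        Real.sqrt (NormedSpace.exp (s • L) p'.1 p.1 * NormedSpace.exp (s • L) p'.2 p.2)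
          * ‖ρ t p.1 p.2‖ := by
      intro p' hp'
      have hp'' : ω p'.1 - ω p'.2 = ω x' - ω y' := (Finset.mem_filter.1 hp').2
      have hthis := hbound s hs0 t ht p'.1 p'.2
      rw [hp''] at hthis
      exact hthis
    calc A (t + s) ≤ ∑ p' ∈ C, ∑ p ∈ C,
          Real.sqrt (NormedSpace.exp (s • L) p'.1 p.1 * NormedSpace.exp (s • L) p'.2 p.2)
            * ‖ρ t p.1 p.2‖ := Finset.sum_le_sum hb
      _ = ∑ p ∈ C, (∑ p' ∈ C,
          Real.sqrt (NormedSpace.exp (s • L) p'.1 p.1 * NormedSpace.exp (s • L) p'.2 p.2))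
            * ‖ρ t p.1 p.2‖ := by
          rw [Finset.sum_comm]
          exact Finset.sum_congr rfl fun p _ => (Finset.sum_mul _ _ _).symm
      _ ≤ ∑ p ∈ C, q * ‖ρ t p.1 p.2‖ :=
          Finset.sum_le_sum fun p hp =>
            mul_le_mul_of_nonneg_right (hinner p hp) (norm_nonneg _)
      _ = q * A t := by rw [← Finset.mul_sum]
  -- iteration
  have hiter : ∀ (n : ℕ) (s : ℝ), S₀ ≤ s → A ((n : ℝ) * s) ≤ q ^ n * A 0 := by
    intro n
    induction n with
    | zero => intro s _; simp
    | succ n ih =>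
      intro s hs
      have hs0 : (0:ℝ) ≤ s := le_trans (by linarith) hs
      have h1 : ((n + 1 : ℕ) : ℝ) * s = (n : ℝ) * s + s := by push_cast; ring
      rw [h1]
      calc A ((n : ℝ) * s + s) ≤ q * A ((n : ℝ) * s) :=
            hkey s hs _ (mul_nonneg (Nat.cast_nonneg n) hs0)
        _ ≤ q * (q ^ n * A 0) := mul_le_mul_of_nonneg_left (ih s hs) hq0
        _ = q ^ (n + 1) * A 0 := by ring
  -- A tends to zero
  have hAlim : Filter.Tendsto A Filter.atTop (nhds 0) := by
    rw [Metric.tendsto_atTop]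
    intro ε' hε'
    have hgeo : Filter.Tendsto (fun n : ℕ => q ^ n * A 0) Filter.atTop (nhds 0) := by
      simpa using (tendsto_pow_atTop_nhds_zero_of_lt_one hq0 hq1).mul_const (A 0)
    obtain ⟨n, hn⟩ := (hgeo.eventually (gt_mem_nhds hε')).exists
    refine ⟨((n + 1 : ℕ) : ℝ) * S₀, fun t ht => ?_⟩
    have hn1 : (0:ℝ) < ((n + 1 : ℕ) : ℝ) := by positivity
    have hsS : S₀ ≤ t / ((n + 1 : ℕ) : ℝ) := by
      rw [le_div_iff₀ hn1]
      calc S₀ * ((n + 1 : ℕ) : ℝ) = ((n + 1 : ℕ) : ℝ) * S₀ := mul_comm _ _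
        _ ≤ t := ht
    have ht' : t = ((n + 1 : ℕ) : ℝ) * (t / ((n + 1 : ℕ) : ℝ)) := by
      field_simp
    have hAt : A t ≤ q ^ (n + 1) * A 0 := by
      rw [ht']
      exact hiter (n + 1) _ hsS
    have hstep : q ^ (n + 1) * A 0 ≤ q ^ n * A 0 :=
      mul_le_mul_of_nonneg_right (pow_le_pow_of_le_one hq0 hq1.le (Nat.le_succ n)) (hA0 0)
    rw [Real.dist_eq, sub_zero, abs_of_nonneg (hA0 t)]
    calc A t ≤ q ^ (n + 1) * A 0 := hAt
      _ ≤ q ^ n * A 0 := hstep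
      _ < ε' := hn
  exact squeeze_zero (fun t => norm_nonneg _) hρA hAlim
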